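/- arXiv:1809.06407 — 5 statements merged into one kernel-verified Lean document; each statement's English description precedes it below -/
import Mathlib

section
/- Let G be a simple graph on n vertices with double star sequence S_{i,j}(G) and double star frequency numbers f_{a,b}. Then for 0 ≤ a ≤ n−2: f_{a,a} = ∑_{i=0}^{n−2} ∑_{j=i}^{n−2} (−1)^{i+j} C(i,a) C(j,a) S_{i,j}(G). (Inversion of the double star sequence in the diagonal case.) -/
open Finset

variable {V : Type*} [Fintype V] [DecidableEq V]

/-- Sum over the edges of `G` of a symmetric function of the endpoint degrees. -/
def edgeSum (G : SimpleGraph V) [DecidableRel G.Adj] {R : Type*} [AddCommMonoid R] (f : ℕ → ℕ → R)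
    (hf : ∀ x y, f x y = f y x) : R :=
  ∑ e ∈ G.edgeFinset, Sym2.lift ⟨fun u v => f (G.degree u) (G.degree v),
    fun _ _ => hf _ _⟩ e

/-- The double star sequence `S_{a,b}(G)`. -/
def dstar (G : SimpleGraph V) [DecidableRel G.Adj] (a b : ℕ) : ℕ :=
  if a = b then
    edgeSum G (fun du dv => (du - 1).choose a * (dv - 1).choose a) (fun x y => by ring)
  else
    edgeSum G (fun du dv => (du - 1).choose a * (dv - 1).choose b
      + (du - 1).choose b * (dv - 1).choose a) (fun x y => by ring)

/-- `dfreq G i j` is the number of edges of `G` whose endpoint degrees are `i+1` and `j+1`. -/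
def dfreq (G : SimpleGraph V) [DecidableRel G.Adj] (i j : ℕ) : ℕ :=
  (G.edgeFinset.filter fun e =>
    Sym2.lift ⟨fun u v => ({G.degree u, G.degree v} : Multiset ℕ),
      fun _ _ => Multiset.cons_swap _ _ _⟩ e = ({i + 1, j + 1} : Multiset ℕ)).card

/-- The general second Zagreb index `M₂⁽ᵖ⁾(G)`. -/
def zagreb2 (G : SimpleGraph V) [DecidableRel G.Adj] (p : ℕ) : ℕ :=
  edgeSum G (fun du dv => (du * dv) ^ p) (fun x y => by ring)

/-- Orthogonality of binomial coefficients. -/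
lemma orth (N a m : ℕ) (hm : m ≤ N) :
    ∑ i ∈ range (N + 1), (-1 : ℤ) ^ i * (i.choose a) * (m.choose i)
      = (-1 : ℤ) ^ a * (if m = a then 1 else 0) := by
  have h1 : ∑ i ∈ range (N + 1), (-1 : ℤ) ^ i * (i.choose a) * (m.choose i)
      = ∑ i ∈ range (m + 1), (-1 : ℤ) ^ i * (i.choose a) * (m.choose i) := by
    refine (Finset.sum_subset (by simpa using Nat.succ_le_succ hm) ?_).symm
    intro x _ hx
    have : m < x := by simpa using hx
    simp [Nat.choose_eq_zero_of_lt this]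
  rw [h1]
  by_cases ham : a ≤ m
  · have h2 : ∑ i ∈ range (m + 1), (-1 : ℤ) ^ i * (i.choose a) * (m.choose i)
        = ∑ i ∈ Finset.Ico a (m + 1), (-1 : ℤ) ^ i * (i.choose a) * (m.choose i) := by
      refine (Finset.sum_subset (by intro x hx; simp only [Finset.mem_Ico, Finset.mem_range] at *; omega) ?_).symm
      · intro x hx hxn
        simp only [Finset.mem_range] at hx
        simp only [Finset.mem_Ico, not_and, not_lt] at hxn
        have : x < a := by omega
        simp [Nat.choose_eq_zero_of_lt this]
    rw [h2, Finset.sum_Ico_eq_sum_range]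
    have h3 : ∀ k ∈ range (m + 1 - a), (-1 : ℤ) ^ (a + k) * ((a + k).choose a)
        * (m.choose (a + k)) = ((-1 : ℤ) ^ a * m.choose a) * ((-1 : ℤ) ^ k * (m - a).choose k) := by
      intro k hk
      simp only [Finset.mem_range] at hk
      have hc : m.choose (a + k) * (a + k).choose a = m.choose a * (m - a).choose k := by
        have := Nat.choose_mul (n := m) (k := a + k) (s := a) (by omega)
        simpa using this
      have hc' : ((m.choose (a + k) : ℤ)) * ((a + k).choose a)
          = (m.choose a : ℤ) * ((m - a).choose k) := by exact_mod_cast hc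
      rw [pow_add]
      linear_combination ((-1 : ℤ) ^ a * (-1 : ℤ) ^ k) * hc'
    rw [Finset.sum_congr rfl h3, ← Finset.mul_sum]
    have : m + 1 - a = (m - a) + 1 := by omega
    rw [this, Int.alternating_sum_range_choose]
    by_cases h : m = a
    · subst h; simp
    · have : ¬ (m - a = 0) := by omega
      simp [this, h]
  · have : ∀ i ∈ range (m + 1), (-1 : ℤ) ^ i * (i.choose a) * (m.choose i) = 0 := by
      intro i hi
      simp only [Finset.mem_range] at hi
      have : i < a := by omega
      simp [Nat.choose_eq_zero_of_lt this]
    rw [Finset.sum_eq_zero this]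
    have : m ≠ a := by omega
    simp [this]

/-- Triangle-to-square summation. -/
lemma tri (M : ℕ) (f : ℕ → ℕ → ℤ) :
    ∑ i ∈ range (M + 1), ∑ j ∈ Finset.Icc i M, (if i = j then f i i else f i j + f j i)
      = ∑ i ∈ range (M + 1), ∑ j ∈ range (M + 1), f i j := by
  induction M with
  | zero => simp
  | succ M ih =>
    have hrow : ∑ j ∈ Finset.Icc (M + 1) (M + 1),
        (if M + 1 = j then f (M+1) (M+1) else f (M+1) j + f j (M+1)) = f (M+1) (M+1) := by
      simp
    have hin : ∀ i ∈ range (M + 1), ∑ j ∈ Finset.Icc i (M + 1),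
        (if i = j then f i i else f i j + f j i)
        = (∑ j ∈ Finset.Icc i M, (if i = j then f i i else f i j + f j i))
          + (f i (M+1) + f (M+1) i) := by
      intro i hi
      simp only [Finset.mem_range] at hi
      have hins : Finset.Icc i (M + 1) = insert (M + 1) (Finset.Icc i M) := by
        ext x; simp only [Finset.mem_Icc, Finset.mem_insert]; omega
      rw [hins, Finset.sum_insert (by simp)]
      have : ¬ (i = M + 1) := by omega
      rw [if_neg this]; ring
    have lhs_eq : (∑ i ∈ range (M + 2), ∑ j ∈ Finset.Icc i (M + 1),
        (if i = j then f i i else f i j + f j i))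
        = ((∑ i ∈ range (M + 1), ∑ j ∈ Finset.Icc i M, (if i = j then f i i else f i j + f j i))
          + ∑ i ∈ range (M + 1), (f i (M+1) + f (M+1) i)) + f (M+1) (M+1) := by
      rw [Finset.sum_range_succ, hrow, Finset.sum_congr rfl hin, Finset.sum_add_distrib]
    have rhs_eq : (∑ i ∈ range (M + 2), ∑ j ∈ range (M + 2), f i j)
        = ((∑ i ∈ range (M + 1), ∑ j ∈ range (M + 1), f i j)
          + ∑ i ∈ range (M + 1), f i (M + 1))
          + ((∑ j ∈ range (M + 1), f (M+1) j) + f (M+1) (M+1)) := by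
      rw [Finset.sum_range_succ]
      congr 1
      · rw [← Finset.sum_add_distrib]
        exact Finset.sum_congr rfl fun i _ => Finset.sum_range_succ _ _
      · exact Finset.sum_range_succ _ _
    rw [lhs_eq, rhs_eq, ih, Finset.sum_add_distrib]
    ring

lemma pair_multiset (x y c : ℕ) : ({x, y} : Multiset ℕ) = {c, c} ↔ x = c ∧ y = c := by
  constructor
  · intro h
    have hx : x ∈ ({c, c} : Multiset ℕ) := h ▸ by simp
    have hy : y ∈ ({c, c} : Multiset ℕ) := h ▸ by simp
    simp only [Multiset.insert_eq_cons, Multiset.mem_cons, Multiset.mem_singleton, or_self] at hx hy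
    exact ⟨hx, hy⟩
  · rintro ⟨rfl, rfl⟩; rfl

/-- Key per-edge identity. -/
lemma key (N a x y : ℕ) (hx : x ≤ N) (hy : y ≤ N) :
    ∑ i ∈ range (N + 1), ∑ j ∈ Finset.Icc i N,
      (-1 : ℤ) ^ (i + j) * (i.choose a) * (j.choose a) *
        (if i = j then (x.choose i : ℤ) * y.choose i
         else (x.choose i : ℤ) * y.choose j + (x.choose j : ℤ) * y.choose i)
      = if x = a ∧ y = a then 1 else 0 := by
  set t : ℕ → ℕ → ℤ := fun i j =>
    ((-1 : ℤ) ^ i * (i.choose a) * (x.choose i)) * ((-1 : ℤ) ^ j * (j.choose a) * (y.choose j))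
    with ht
  have hstep : ∑ i ∈ range (N + 1), ∑ j ∈ Finset.Icc i N,
      (-1 : ℤ) ^ (i + j) * (i.choose a) * (j.choose a) *
        (if i = j then (x.choose i : ℤ) * y.choose i
         else (x.choose i : ℤ) * y.choose j + (x.choose j : ℤ) * y.choose i)
      = ∑ i ∈ range (N + 1), ∑ j ∈ Finset.Icc i N, (if i = j then t i i else t i j + t j i) := by
    refine Finset.sum_congr rfl fun i _ => Finset.sum_congr rfl fun j _ => ?_
    by_cases h : i = j
    · subst h
      rw [if_pos rfl, if_pos rfl]
      simp only [ht, pow_add]; ring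
    · rw [if_neg h, if_neg h]
      simp only [ht, pow_add]; ring
  rw [hstep, tri]
  have hfact : ∑ i ∈ range (N + 1), ∑ j ∈ range (N + 1), t i j
      = (∑ i ∈ range (N + 1), (-1 : ℤ) ^ i * (i.choose a) * (x.choose i))
        * (∑ j ∈ range (N + 1), (-1 : ℤ) ^ j * (j.choose a) * (y.choose j)) := by
    rw [Finset.sum_mul_sum]
  rw [hfact, orth _ _ _ hx, orth _ _ _ hy]
  by_cases hxa : x = a <;> by_cases hya : y = a <;>
    simp [hxa, hya, ← mul_pow]

theorem dfreq_diag_eq_alt_sum_dstar (G : SimpleGraph V) [DecidableRel G.Adj]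
    (n : ℕ) (hn : n = Fintype.card V) (a : ℕ) (ha : a ≤ n - 2) :
    (dfreq G a a : ℤ) = ∑ i ∈ Finset.range (n - 1), ∑ j ∈ Finset.Icc i (n - 2),
      (-1 : ℤ) ^ (i + j) * (i.choose a) * (j.choose a) * dstar G i j := by
  classical
  by_cases hn2 : 2 ≤ n
  case neg =>
    -- no edges: card V ≤ 1
    have hcard : Fintype.card V ≤ 1 := by omega
    have hempty : G.edgeFinset = ∅ := by
      ext e
      simp only [SimpleGraph.mem_edgeFinset, Finset.notMem_empty, iff_false]
      induction e using Sym2.ind with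
      | _ u v =>
        intro h
        rw [SimpleGraph.mem_edgeSet] at h
        exact h.ne (Fintype.card_le_one_iff.1 hcard u v)
    have h0 : n - 1 = 0 := by omega
    rw [h0]
    simp [dfreq, hempty]
  case pos =>
    set N := n - 2 with hN
    have hn1 : n - 1 = N + 1 := by omega
    rw [hn1]
    -- rewrite dstar as an edge sum of integers
    set D : ℕ → ℕ → ℕ → ℕ → ℤ := fun i j x y =>
      if i = j then ((x - 1).choose i : ℤ) * ((y - 1).choose i : ℤ)
      else ((x - 1).choose i : ℤ) * ((y - 1).choose j : ℤ)
        + ((x - 1).choose j : ℤ) * ((y - 1).choose i : ℤ) with hD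
    have hDsym : ∀ i j x y, D i j x y = D i j y x := by
      intro i j x y
      by_cases h : i = j <;> simp only [hD, if_pos, if_neg, h] <;> ring
    have hd : ∀ i j : ℕ, ((dstar G i j : ℕ) : ℤ)
        = ∑ e ∈ G.edgeFinset,
            Sym2.lift ⟨fun u v => D i j (G.degree u) (G.degree v),
              fun u v => hDsym i j _ _⟩ e := by
      intro i j
      by_cases h : i = j
      · subst h
        simp only [dstar, if_pos rfl, edgeSum]
        push_cast
        refine Finset.sum_congr rfl fun e _ => ?_
        induction e using Sym2.ind with
        | _ u v => simp [hD]
      · simp only [dstar, if_neg h, edgeSum]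
        push_cast
        refine Finset.sum_congr rfl fun e _ => ?_
        induction e using Sym2.ind with
        | _ u v => simp [hD, h]
    -- swap sums to per-edge
    have hswap : ∑ i ∈ Finset.range (N + 1), ∑ j ∈ Finset.Icc i N,
        (-1 : ℤ) ^ (i + j) * (i.choose a) * (j.choose a) * dstar G i j
        = ∑ e ∈ G.edgeFinset, ∑ i ∈ Finset.range (N + 1), ∑ j ∈ Finset.Icc i N,
            (-1 : ℤ) ^ (i + j) * (i.choose a) * (j.choose a) *
              Sym2.lift ⟨fun u v => D i j (G.degree u) (G.degree v),
                fun u v => hDsym i j _ _⟩ e := by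
      rw [Finset.sum_comm]
      refine Finset.sum_congr rfl fun i _ => ?_
      rw [Finset.sum_comm]
      refine Finset.sum_congr rfl fun j _ => ?_
      rw [hd, Finset.mul_sum]
    rw [hswap, dfreq, Finset.card_filter, Nat.cast_sum]
    refine Finset.sum_congr rfl fun e he => ?_
    revert he
    induction e using Sym2.ind with
    | _ u v =>
      intro he
      rw [SimpleGraph.mem_edgeFinset, SimpleGraph.mem_edgeSet] at he
      have hdu : 1 ≤ G.degree u := by
        rw [Nat.one_le_iff_ne_zero, ← Nat.pos_iff_ne_zero,
          SimpleGraph.degree_pos_iff_exists_adj]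
        exact ⟨v, he⟩
      have hdv : 1 ≤ G.degree v := by
        rw [Nat.one_le_iff_ne_zero, ← Nat.pos_iff_ne_zero,
          SimpleGraph.degree_pos_iff_exists_adj]
        exact ⟨u, he.symm⟩
      have hu : G.degree u < Fintype.card V := G.degree_lt_card_verts u
      have hv : G.degree v < Fintype.card V := G.degree_lt_card_verts v
      have hxN : G.degree u - 1 ≤ N := by omega
      have hyN : G.degree v - 1 ≤ N := by omega
      have hcond : (({G.degree u, G.degree v} : Multiset ℕ) = {a + 1, a + 1})
          ↔ (G.degree u - 1 = a ∧ G.degree v - 1 = a) := by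
        rw [pair_multiset]; omega
      simp only [Sym2.lift_mk]
      have hkey : ∑ i ∈ range (N + 1), ∑ j ∈ Finset.Icc i N,
          (-1 : ℤ) ^ (i + j) * (i.choose a) * (j.choose a) * D i j (G.degree u) (G.degree v)
          = if (G.degree u - 1 = a ∧ G.degree v - 1 = a) then 1 else 0 := by
        exact key N a (G.degree u - 1) (G.degree v - 1) hxN hyN
      rw [hkey]
      by_cases hc : ({G.degree u, G.degree v} : Multiset ℕ) = ({a + 1, a + 1} : Multiset ℕ)
      · rw [if_pos (hcond.mp hc)]
        exact (congrArg (Nat.cast : ℕ → ℤ) (if_pos hc)).trans Nat.cast_one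
      · rw [if_neg (fun h => hc (hcond.mpr h))]
        exact (congrArg (Nat.cast : ℕ → ℤ) (if_neg hc)).trans Nat.cast_zero
end

section
/- Let G be a simple graph on n vertices with double star sequence S_{i,j}(G) and double star frequency numbers f_{a,b}. Then for 0 ≤ a < b ≤ n−2: f_{a,b} = ∑_{i=0}^{n−2} ∑_{j=i}^{n−2} (−1)^{a+b+i+j} (C(i,a)C(j,b) + C(i,b)C(j,a)) S_{i,j}(G). -/
open Finset

variable {V : Type*} [Fintype V] [DecidableEq V]

/-! ### Auxiliary lemmas -/

lemma inv_sum (N c x : ℕ) (hx : x ≤ N) :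
    ∑ i ∈ range (N + 1), (-1 : ℤ) ^ (c + i) * (i.choose c) * (x.choose i)
      = if x = c then 1 else 0 := by
  rcases lt_or_ge x c with h | h
  · rw [if_neg (by omega)]
    apply Finset.sum_eq_zero
    intro i _
    rcases lt_or_ge i c with h2 | h2
    · simp [Nat.choose_eq_zero_of_lt h2]
    · simp [Nat.choose_eq_zero_of_lt (lt_of_lt_of_le h h2)]
  · have hsub : Icc c x ⊆ range (N + 1) := fun i hi => by
      simp only [mem_Icc] at hi; simp only [mem_range]; omega
    rw [← Finset.sum_subset hsub (by
      intro i hi hni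
      simp only [mem_Icc, not_and, not_le] at hni
      simp only [mem_range] at hi
      rcases lt_or_ge i c with h2 | h2
      · simp [Nat.choose_eq_zero_of_lt h2]
      · have : x < i := hni h2
        simp [Nat.choose_eq_zero_of_lt this])]
    have hIcc : Icc c x = Ico c (x + 1) := by rw [Finset.Ico_add_one_right_eq_Icc]
    rw [hIcc, Finset.sum_Ico_eq_sum_range]
    have hterm : ∀ k ∈ range (x + 1 - c),
        (-1 : ℤ) ^ (c + (c + k)) * ((c + k).choose c) * (x.choose (c + k))
          = (x.choose c : ℤ) * ((-1) ^ k * ((x - c).choose k)) := by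
      intro k hk
      simp only [mem_range] at hk
      have hkx : c + k ≤ x := by omega
      have := Nat.choose_mul (n := x) (Nat.le_add_right c k)
      have h2 : (x.choose (c + k) : ℤ) * ((c + k).choose c) =
          (x.choose c : ℤ) * ((x - c).choose k) := by
        rw [Nat.add_sub_cancel_left] at this; exact_mod_cast congrArg (Nat.cast : ℕ → ℤ) this
      have hsign : (-1 : ℤ) ^ (c + (c + k)) = (-1) ^ k := by
        rw [show c + (c + k) = 2 * c + k by ring, pow_add, pow_mul]
        simp
      rw [hsign]
      linear_combination ((-1 : ℤ) ^ k) * h2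
    rw [Finset.sum_congr rfl hterm, ← Finset.mul_sum]
    have hr : x + 1 - c = x - c + 1 := by omega
    rw [hr, Int.alternating_sum_range_choose]
    by_cases hxc : x = c
    · subst hxc; simp
    · rw [if_neg (by omega), if_neg hxc, mul_zero]

lemma sq_sum (N a b x y : ℕ) (hx : x ≤ N) (hy : y ≤ N) :
    ∑ i ∈ range (N + 1), ∑ j ∈ range (N + 1),
        (-1 : ℤ) ^ (a + b + i + j) * ((i.choose a) * (j.choose b) + (i.choose b) * (j.choose a))
          * ((x.choose i) * (y.choose j))
      = (if x = a then 1 else 0) * (if y = b then 1 else 0)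
        + (if x = b then 1 else 0) * (if y = a then 1 else 0) := by
  have key : ∀ i j : ℕ,
      (-1 : ℤ) ^ (a + b + i + j) * ((i.choose a) * (j.choose b) + (i.choose b) * (j.choose a))
          * ((x.choose i) * (y.choose j))
        = ((-1 : ℤ) ^ (a + i) * (i.choose a) * (x.choose i))
            * ((-1 : ℤ) ^ (b + j) * (j.choose b) * (y.choose j))
          + ((-1 : ℤ) ^ (b + i) * (i.choose b) * (x.choose i))
            * ((-1 : ℤ) ^ (a + j) * (j.choose a) * (y.choose j)) := by
    intro i j
    simp only [pow_add]
    ring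
  simp_rw [key, Finset.sum_add_distrib, ← Finset.mul_sum, ← Finset.sum_mul]
  rw [inv_sum N a x hx, inv_sum N b y hy, inv_sum N b x hx, inv_sum N a y hy]

lemma tri_sq (N : ℕ) (T g : ℕ → ℕ → ℤ) (hT : ∀ i j, T i j = T j i) :
    ∑ i ∈ range (N + 1), ∑ j ∈ Icc i N, T i j * (if i = j then g i j else g i j + g j i)
      = ∑ i ∈ range (N + 1), ∑ j ∈ range (N + 1), T i j * g i j := by
  have hsplit : ∀ i ∈ range (N + 1),
      ∑ j ∈ range (N + 1), T i j * g i j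
        = ∑ j ∈ range i, T i j * g i j + ∑ j ∈ Icc i N, T i j * g i j := by
    intro i hi
    simp only [mem_range] at hi
    rw [range_eq_Ico, ← Finset.sum_Ico_consecutive (fun j => T i j * g i j)
      (Nat.zero_le i) (by omega : i ≤ N + 1), ← range_eq_Ico, Finset.Ico_add_one_right_eq_Icc]
  rw [Finset.sum_congr rfl hsplit, Finset.sum_add_distrib]
  have hswap : ∑ i ∈ range (N + 1), ∑ j ∈ range i, T i j * g i j
      = ∑ j ∈ range (N + 1), ∑ i ∈ Icc (j + 1) N, T i j * g i j := by
    apply Finset.sum_comm'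
    intro i j
    simp only [mem_range, mem_Icc]
    omega
  rw [hswap]
  have hswap2 : ∑ j ∈ range (N + 1), ∑ i ∈ Icc (j + 1) N, T i j * g i j
      = ∑ i ∈ range (N + 1), ∑ j ∈ Icc (i + 1) N, T i j * g j i := by
    apply Finset.sum_congr rfl
    intro i _
    apply Finset.sum_congr rfl
    intro j _
    rw [hT j i]
  rw [hswap2, ← Finset.sum_add_distrib]
  apply Finset.sum_congr rfl
  intro i hi
  simp only [mem_range] at hi
  have hins : Icc i N = insert i (Icc (i + 1) N) := by
    rw [Finset.Icc_add_one_left_eq_Ioc, Finset.Ioc_insert_left (by omega : i ≤ N)]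
  have hni : i ∉ Icc (i + 1) N := by simp
  rw [hins, Finset.sum_insert hni, Finset.sum_insert hni, if_pos rfl]
  have hcong : ∀ j ∈ Icc (i + 1) N,
      T i j * (if i = j then g i j else g i j + g j i) = T i j * g i j + T i j * g j i := by
    intro j hj
    simp only [mem_Icc] at hj
    rw [if_neg (by omega), mul_add]
  rw [Finset.sum_congr rfl hcong, Finset.sum_add_distrib]
  ring

lemma pair_eq_pair' {α : Type*} {p q r s : α} :
    ({p, q} : Multiset α) = {r, s} ↔ (p = r ∧ q = s) ∨ (p = s ∧ q = r) := by
  constructor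
  · intro h
    rw [show ({p, q} : Multiset α) = p ::ₘ {q} from rfl,
      show ({r, s} : Multiset α) = r ::ₘ {s} from rfl, Multiset.cons_eq_cons] at h
    rcases h with ⟨h1, h2⟩ | ⟨h1, cs, h2, h3⟩
    · exact Or.inl ⟨h1, Multiset.singleton_inj.mp h2⟩
    · rw [Multiset.singleton_eq_cons_iff] at h2 h3
      exact Or.inr ⟨h3.1.symm, h2.1⟩
  · rintro (⟨h1, h2⟩ | ⟨h1, h2⟩) <;> subst h1 <;> subst h2
    · rfl
    · exact Multiset.cons_swap _ _ _

lemma ite_combine (a b x y : ℕ) (hab : a < b) :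
    (if x = a then (1 : ℤ) else 0) * (if y = b then 1 else 0)
        + (if x = b then 1 else 0) * (if y = a then 1 else 0)
      = if (x = a ∧ y = b) ∨ (x = b ∧ y = a) then 1 else 0 := by
  by_cases h1 : x = a <;> by_cases h2 : y = b <;> by_cases h3 : x = b <;>
    by_cases h4 : y = a <;> simp_all

/-- Per-edge symmetric summand. -/
def se (G : SimpleGraph V) [DecidableRel G.Adj] (i j : ℕ) : Sym2 V → ℤ :=
  Sym2.lift ⟨fun u v =>
    if i = j then ((G.degree u - 1).choose i : ℤ) * ((G.degree v - 1).choose j)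
    else ((G.degree u - 1).choose i : ℤ) * ((G.degree v - 1).choose j)
      + ((G.degree u - 1).choose j : ℤ) * ((G.degree v - 1).choose i),
    fun u v => by
      dsimp only
      split_ifs with h
      · subst h; ring
      · ring⟩

lemma se_mk (G : SimpleGraph V) [DecidableRel G.Adj] (i j : ℕ) (u v : V) :
    se G i j s(u, v)
      = if i = j then ((G.degree u - 1).choose i : ℤ) * ((G.degree v - 1).choose j)
        else ((G.degree u - 1).choose i : ℤ) * ((G.degree v - 1).choose j)
          + ((G.degree u - 1).choose j : ℤ) * ((G.degree v - 1).choose i) := by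
  simp [se]

lemma dstar_cast (G : SimpleGraph V) [DecidableRel G.Adj] (i j : ℕ) (hij : i ≤ j) :
    (dstar G i j : ℤ) = ∑ e ∈ G.edgeFinset, se G i j e := by
  rcases eq_or_lt_of_le hij with h | h
  · subst h
    rw [dstar, if_pos rfl, edgeSum, Nat.cast_sum]
    refine Finset.sum_congr rfl fun e _ => ?_
    induction e using Sym2.ind with
    | _ u v => rw [Sym2.lift_mk, se_mk, if_pos rfl]; push_cast; ring
  · rw [dstar, if_neg h.ne, edgeSum, Nat.cast_sum]
    refine Finset.sum_congr rfl fun e _ => ?_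
    induction e using Sym2.ind with
    | _ u v => rw [Sym2.lift_mk, se_mk, if_neg h.ne]; push_cast; ring

theorem dfreq_eq_alt_sum_dstar (G : SimpleGraph V) [DecidableRel G.Adj]
    (n : ℕ) (hn : n = Fintype.card V) (a b : ℕ) (hab : a < b) (hb : b ≤ n - 2) :
    (dfreq G a b : ℤ) = ∑ i ∈ Finset.range (n - 1), ∑ j ∈ Finset.Icc i (n - 2),
      (-1 : ℤ) ^ (a + b + i + j) *
        ((i.choose a) * (j.choose b) + (i.choose b) * (j.choose a)) * dstar G i j := by
  have hn3 : 3 ≤ n := by omega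
  set N := n - 2 with hN
  have hrange : n - 1 = N + 1 := by omega
  rw [hrange]
  -- transform the RHS into a sum over edges
  have h1 : ∑ i ∈ range (N + 1), ∑ j ∈ Icc i N,
      (-1 : ℤ) ^ (a + b + i + j) *
        ((i.choose a) * (j.choose b) + (i.choose b) * (j.choose a)) * (dstar G i j : ℤ)
      = ∑ e ∈ G.edgeFinset, ∑ i ∈ range (N + 1), ∑ j ∈ Icc i N,
        (-1 : ℤ) ^ (a + b + i + j) *
          ((i.choose a) * (j.choose b) + (i.choose b) * (j.choose a)) * se G i j e := by
    rw [Finset.sum_comm]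
    refine Finset.sum_congr rfl fun i _ => ?_
    rw [Finset.sum_comm]
    refine Finset.sum_congr rfl fun j hj => ?_
    simp only [mem_Icc] at hj
    rw [dstar_cast G i j hj.1, Finset.mul_sum]
  rw [h1]
  -- edge-by-edge identity
  rw [dfreq, Finset.card_filter, Nat.cast_sum]
  refine Finset.sum_congr rfl fun e he => ?_
  rw [SimpleGraph.mem_edgeFinset] at he
  induction e using Sym2.ind with
  | _ u v =>
    rw [SimpleGraph.mem_edgeSet] at he
    have hdu : 0 < G.degree u := G.degree_pos_iff_exists_adj u |>.mpr ⟨v, he⟩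
    have hdv : 0 < G.degree v := G.degree_pos_iff_exists_adj v |>.mpr ⟨u, he.symm⟩
    have hx : G.degree u - 1 ≤ N := by
      have := G.degree_lt_card_verts u; omega
    have hy : G.degree v - 1 ≤ N := by
      have := G.degree_lt_card_verts v; omega
    have hR : ∑ i ∈ range (N + 1), ∑ j ∈ Icc i N,
        (-1 : ℤ) ^ (a + b + i + j) *
          ((i.choose a) * (j.choose b) + (i.choose b) * (j.choose a)) * se G i j s(u, v)
        = if ((G.degree u - 1 = a ∧ G.degree v - 1 = b) ∨
            (G.degree u - 1 = b ∧ G.degree v - 1 = a)) then 1 else 0 := by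
      simp only [se_mk]
      rw [tri_sq N
        (fun i j => (-1 : ℤ) ^ (a + b + i + j) *
          ((i.choose a) * (j.choose b) + (i.choose b) * (j.choose a)))
        (fun i j => ((G.degree u - 1).choose i : ℤ) * ((G.degree v - 1).choose j))
        (fun i j => by ring)]
      rw [sq_sum N a b _ _ hx hy, ite_combine a b _ _ hab]
    rw [hR, Sym2.lift_mk]
    have hiff : (({G.degree u, G.degree v} : Multiset ℕ) = {a + 1, b + 1})
        ↔ ((G.degree u - 1 = a ∧ G.degree v - 1 = b) ∨
            (G.degree u - 1 = b ∧ G.degree v - 1 = a)) := by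
      rw [pair_eq_pair']
      omega
    rw [if_congr hiff rfl rfl]
    split_ifs <;> simp
end

section
/- Let G be a simple graph on n vertices and p a natural number. Then the general second Zagreb index satisfies M_2^{(p)}(G) = ∑_{i=0}^{n−2} ∑_{k=i}^{n−2} i! · k! · S(p+1, i+1) · S(p+1, k+1) · S_{i,k}(G), where S(n,k) are Stirling numbers of the second kind and S_{i,k}(G) is the double star sequence. -/
open Finset

variable {V : Type*} [Fintype V] [DecidableEq V]

/-- Stirling numbers of the second kind. -/
def stirling2 : ℕ → ℕ → ℕ
  | 0, 0 => 1
  | 0, _ + 1 => 0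
  | _ + 1, 0 => 0
  | n + 1, k + 1 => (k + 1) * stirling2 n (k + 1) + stirling2 n k

lemma stirling2_succ_succ (n k : ℕ) :
    stirling2 (n+1) (k+1) = (k+1) * stirling2 n (k+1) + stirling2 n k := rfl

lemma pow_eq_sum_stirling (d : ℕ) (hd : 1 ≤ d) (p : ℕ) :
    d ^ p = ∑ i ∈ Finset.range d, i.factorial * stirling2 (p+1) (i+1) * (d-1).choose i := by
  induction p with
  | zero =>
    rw [Finset.sum_eq_single 0]
    · simp [stirling2]
    · intro i _ h0
      obtain ⟨j, rfl⟩ := Nat.exists_eq_succ_of_ne_zero h0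
      simp [stirling2]
    · intro h; exact absurd (Finset.mem_range.mpr hd) h
  | succ p ih =>
    have key : ∀ i : ℕ, d * (d-1).choose i = (i+1) * (d-1).choose i + (i+1) * (d-1).choose (i+1) := by
      intro i
      have h1 : d * (d-1).choose i = ((d-1)+1) * (d-1).choose i := by congr 1; omega
      rw [h1, Nat.add_one_mul_choose_eq, Nat.choose_succ_succ]
      simp [Nat.succ_eq_add_one]
      ring
    have step : d ^ (p+1) = ∑ i ∈ Finset.range d,
        ((i+1).factorial * stirling2 (p+1) (i+1) * (d-1).choose i
          + (i+1).factorial * stirling2 (p+1) (i+1) * (d-1).choose (i+1)) := by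
      calc d ^ (p+1) = d * d ^ p := by ring
        _ = ∑ i ∈ Finset.range d, i.factorial * stirling2 (p+1) (i+1) * (d * (d-1).choose i) := by
            rw [ih, Finset.mul_sum]; apply Finset.sum_congr rfl; intros; ring
        _ = _ := by
            apply Finset.sum_congr rfl; intro i _
            rw [key i, Nat.factorial_succ]; ring
    rw [step, Finset.sum_add_distrib]
    have reidx : ∑ i ∈ Finset.range d, (i+1).factorial * stirling2 (p+1) (i+1) * (d-1).choose (i+1)
        = ∑ i ∈ Finset.range d, i.factorial * stirling2 (p+1) i * (d-1).choose i := by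
      have h1 := Finset.sum_range_succ' (fun j => j.factorial * stirling2 (p+1) j * (d-1).choose j) d
      have h2 := Finset.sum_range_succ (fun j => j.factorial * stirling2 (p+1) j * (d-1).choose j) d
      simp only [Nat.factorial_zero, Nat.choose_zero_right] at h1 h2
      rw [h2] at h1
      have hg0 : stirling2 (p+1) 0 = 0 := rfl
      have hgd : (d-1).choose d = 0 := Nat.choose_eq_zero_of_lt (by omega)
      rw [hg0, hgd] at h1
      simp at h1
      omega
    rw [reidx, ← Finset.sum_add_distrib]
    apply Finset.sum_congr rfl
    intro i _
    have hst : stirling2 (p+1+1) (i+1) = (i+1) * stirling2 (p+1) (i+1) + stirling2 (p+1) i :=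
      stirling2_succ_succ (p+1) i
    rw [hst, Nat.factorial_succ]
    ring

lemma square_split (N : ℕ) (f : ℕ → ℕ → ℕ) :
    ∑ i ∈ Finset.range N, ∑ k ∈ Finset.range N, f i k
      = ∑ i ∈ Finset.range N, ∑ k ∈ (Finset.range N).filter (i ≤ ·),
          (if i = k then f i i else f i k + f k i) := by
  have h1 : ∀ i, ∑ k ∈ (Finset.range N).filter (i ≤ ·), (if i = k then f i i else f i k + f k i)
      = ∑ k ∈ (Finset.range N).filter (i ≤ ·), f i k
        + ∑ k ∈ (Finset.range N).filter (i ≤ ·), (if i = k then 0 else f k i) := by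
    intro i
    rw [← Finset.sum_add_distrib]
    apply Finset.sum_congr rfl
    intro k hk
    by_cases h : i = k
    · subst h; simp
    · simp [h]
  simp only [h1]
  rw [Finset.sum_add_distrib]
  have h2 : ∀ i, ∑ k ∈ (Finset.range N).filter (i ≤ ·), (if i = k then 0 else f k i)
      = ∑ k ∈ Finset.range N, (if i < k then f k i else 0) := by
    intro i
    rw [Finset.sum_filter]
    apply Finset.sum_congr rfl
    intro k _
    split_ifs <;> first | rfl | (exfalso; omega)
  simp only [h2]
  have h3 : ∑ i ∈ Finset.range N, ∑ k ∈ Finset.range N, (if i < k then f k i else 0)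
      = ∑ i ∈ Finset.range N, ∑ k ∈ Finset.range N, (if k < i then f i k else 0) :=
    Finset.sum_comm
  rw [h3]
  have h4 : ∀ i, ∑ k ∈ (Finset.range N).filter (i ≤ ·), f i k
      = ∑ k ∈ Finset.range N, (if i ≤ k then f i k else 0) := fun i => Finset.sum_filter _ _
  simp only [h4]
  rw [← Finset.sum_add_distrib]
  apply Finset.sum_congr rfl
  intro i _
  rw [← Finset.sum_add_distrib]
  apply Finset.sum_congr rfl
  intro k _
  split_ifs <;> first | omega | simp

lemma pow_eq_sum_stirling' (d N : ℕ) (hd : 1 ≤ d) (hN : d ≤ N) (p : ℕ) :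
    d ^ p = ∑ i ∈ Finset.range N, i.factorial * stirling2 (p+1) (i+1) * (d-1).choose i := by
  rw [pow_eq_sum_stirling d hd p]
  apply Finset.sum_subset (Finset.range_subset_range.mpr hN)
  intro i _ hi
  rw [Finset.mem_range, not_lt] at hi
  rw [Nat.choose_eq_zero_of_lt (by omega), mul_zero]

lemma per_edge_identity (n p a b : ℕ) (ha1 : 1 ≤ a) (han : a < n) (hb1 : 1 ≤ b) (hbn : b < n) :
    (a * b) ^ p = ∑ i ∈ Finset.range (n-1), ∑ k ∈ Finset.Icc i (n-2),
      i.factorial * k.factorial * stirling2 (p+1) (i+1) * stirling2 (p+1) (k+1) *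
        (if i = k then (a-1).choose i * (b-1).choose i
         else ((a-1).choose i * (b-1).choose k + (a-1).choose k * (b-1).choose i)) := by
  have hn2 : 2 ≤ n := by omega
  have hIcc : ∀ i, Finset.Icc i (n-2) = (Finset.range (n-1)).filter (i ≤ ·) := by
    intro i
    ext k
    simp only [Finset.mem_Icc, Finset.mem_filter, Finset.mem_range]
    omega
  simp only [hIcc]
  rw [mul_pow, pow_eq_sum_stirling' a (n-1) ha1 (by omega) p,
      pow_eq_sum_stirling' b (n-1) hb1 (by omega) p, Finset.sum_mul_sum,
      square_split (n-1) (fun i k => (i.factorial * stirling2 (p+1) (i+1) * (a-1).choose i)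
        * (k.factorial * stirling2 (p+1) (k+1) * (b-1).choose k))]
  apply Finset.sum_congr rfl; intro i _
  apply Finset.sum_congr rfl; intro k _
  split_ifs with h
  · subst h; ring
  · ring


theorem zagreb2_eq_sum_dstar (G : SimpleGraph V) [DecidableRel G.Adj]
    (n : ℕ) (hn : n = Fintype.card V) (p : ℕ) :
    zagreb2 G p = ∑ i ∈ Finset.range (n - 1), ∑ k ∈ Finset.Icc i (n - 2),
      i.factorial * k.factorial * stirling2 (p + 1) (i + 1) * stirling2 (p + 1) (k + 1) *
        dstar G i k := by
  have hdstar : ∀ i k : ℕ, dstar G i k = ∑ e ∈ G.edgeFinset,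
      Sym2.lift ⟨fun u v => if i = k
          then (G.degree u - 1).choose i * (G.degree v - 1).choose i
          else ((G.degree u - 1).choose i * (G.degree v - 1).choose k
            + (G.degree u - 1).choose k * (G.degree v - 1).choose i),
        fun u v => by dsimp only; split_ifs <;> ring⟩ e := by
    intro i k
    by_cases h : i = k
    · subst h
      simp only [dstar, if_pos rfl, edgeSum]
      apply Finset.sum_congr rfl
      intro e _
      induction e using Sym2.ind with
      | _ u v => simp
    · simp only [dstar, if_neg h, edgeSum]
      try (apply Finset.sum_congr rfl
           intro e _
           induction e using Sym2.ind with
           | _ u v => simp [h])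
  simp only [hdstar, Finset.mul_sum]
  have swap1 : ∀ i ∈ Finset.range (n-1),
      ∑ k ∈ Finset.Icc i (n-2), ∑ e ∈ G.edgeFinset,
        (i.factorial * k.factorial * stirling2 (p+1) (i+1) * stirling2 (p+1) (k+1) *
          Sym2.lift ⟨fun u v => if i = k
            then (G.degree u - 1).choose i * (G.degree v - 1).choose i
            else ((G.degree u - 1).choose i * (G.degree v - 1).choose k
              + (G.degree u - 1).choose k * (G.degree v - 1).choose i),
          fun u v => by dsimp only; split_ifs <;> ring⟩ e)
      = ∑ e ∈ G.edgeFinset, ∑ k ∈ Finset.Icc i (n-2),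
        (i.factorial * k.factorial * stirling2 (p+1) (i+1) * stirling2 (p+1) (k+1) *
          Sym2.lift ⟨fun u v => if i = k
            then (G.degree u - 1).choose i * (G.degree v - 1).choose i
            else ((G.degree u - 1).choose i * (G.degree v - 1).choose k
              + (G.degree u - 1).choose k * (G.degree v - 1).choose i),
          fun u v => by dsimp only; split_ifs <;> ring⟩ e) := by
    intro i _
    exact Finset.sum_comm
  rw [Finset.sum_congr rfl swap1, Finset.sum_comm]
  unfold zagreb2 edgeSum
  apply Finset.sum_congr rfl
  intro e he
  induction e using Sym2.ind with
  | _ u v =>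
    rw [SimpleGraph.mem_edgeFinset, SimpleGraph.mem_edgeSet] at he
    have hu1 : 1 ≤ G.degree u := by
      rw [Nat.one_le_iff_ne_zero, ← Nat.pos_iff_ne_zero]
      exact G.degree_pos_iff_exists_adj u |>.mpr ⟨v, he⟩
    have hv1 : 1 ≤ G.degree v := by
      rw [Nat.one_le_iff_ne_zero, ← Nat.pos_iff_ne_zero]
      exact G.degree_pos_iff_exists_adj v |>.mpr ⟨u, he.symm⟩
    have hun : G.degree u < n := hn ▸ G.degree_lt_card_verts u
    have hvn : G.degree v < n := hn ▸ G.degree_lt_card_verts v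
    simp only [Sym2.lift_mk]
    exact per_edge_identity n p (G.degree u) (G.degree v) hu1 hun hv1 hvn
end

section
/- For any simple graph G, M_2^{(2)}(G) = S_{0,0}(G) + 3 S_{0,1}(G) + 2 S_{0,2}(G) + 9 S_{1,1}(G) + 6 S_{1,2}(G) + 4 S_{2,2}(G), where M_2^{(2)}(G) = ∑_{{u,v}∈E(G)} (d_u d_v)^2. -/
open Finset

variable {V : Type*} [Fintype V] [DecidableEq V]

lemma two_choose_two (n : ℕ) : 2 * n.choose 2 + n = n * n := by
  induction n with
  | zero => rfl
  | succ k ih =>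
    rw [Nat.choose_succ_succ]
    simp only [Nat.choose_one_right]
    ring_nf
    ring_nf at ih
    omega

lemma key_s16 (du dv : ℕ) (hu : 1 ≤ du) (hv : 1 ≤ dv) :
    (du * dv) ^ 2 =
      (du - 1).choose 0 * (dv - 1).choose 0
      + 3 * ((du - 1).choose 0 * (dv - 1).choose 1 + (du - 1).choose 1 * (dv - 1).choose 0)
      + 2 * ((du - 1).choose 0 * (dv - 1).choose 2 + (du - 1).choose 2 * (dv - 1).choose 0)
      + 9 * ((du - 1).choose 1 * (dv - 1).choose 1)
      + 6 * ((du - 1).choose 1 * (dv - 1).choose 2 + (du - 1).choose 2 * (dv - 1).choose 1)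
      + 4 * ((du - 1).choose 2 * (dv - 1).choose 2) := by
  obtain ⟨x, rfl⟩ : ∃ x, du = x + 1 := ⟨du - 1, by omega⟩
  obtain ⟨y, rfl⟩ : ∃ y, dv = y + 1 := ⟨dv - 1, by omega⟩
  simp only [Nat.add_sub_cancel, Nat.choose_zero_right, Nat.choose_one_right]
  have ha := two_choose_two x
  have hb := two_choose_two y
  zify at ha hb ⊢
  linear_combination (-(1: ℤ) - 3*y - 2*(y.choose 2 : ℤ)) * ha + (-(1:ℤ) - 2*x - x*x) * hb

theorem zagreb2_two_eq (G : SimpleGraph V) [DecidableRel G.Adj] :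
    zagreb2 G 2 = dstar G 0 0 + 3 * dstar G 0 1 + 2 * dstar G 0 2
      + 9 * dstar G 1 1 + 6 * dstar G 1 2 + 4 * dstar G 2 2 := by
  simp only [zagreb2, dstar, edgeSum, Finset.mul_sum]
  norm_num only
  simp only [if_true, if_false, Finset.mul_sum]
  rw [← Finset.sum_add_distrib, ← Finset.sum_add_distrib, ← Finset.sum_add_distrib,
    ← Finset.sum_add_distrib, ← Finset.sum_add_distrib]
  refine Finset.sum_congr rfl fun e he => ?_
  induction e using Sym2.ind with
  | _ u v =>
    rw [SimpleGraph.mem_edgeFinset] at he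
    simp only [Sym2.lift_mk]
    have hu : 1 ≤ G.degree u := G.degree_pos_iff_exists_adj u |>.2 ⟨v, he⟩
    have hv : 1 ≤ G.degree v := G.degree_pos_iff_exists_adj v |>.2 ⟨u, he.symm⟩
    exact key_s16 _ _ hu hv
end

section
/- Let G be a simple graph on n vertices, let C_{n−1} = { i·j : 0 ≤ i, j ≤ n−1 }, and let [C_{n−1}; i] be the Comtet numbers of the first kind given by ∏_{c∈C_{n−1}}(z−c) = ∑_i [C_{n−1}; i] z^i. Then the general second Zagreb indexes satisfy the linear recurrence M_2^{(N)}(G) = −∑_{i=1}^{N−1} [C_{n−1}; i] M_2^{(i)}(G), where N = |C_{n−1}|. -/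
open Finset

variable {V : Type*} [Fintype V] [DecidableEq V]

open Polynomial in
/-- The Comtet numbers of the first kind associated with a finite set `S` of naturals. -/
noncomputable def comtet (S : Finset ℕ) (i : ℕ) : ℤ :=
  (∏ s ∈ S, (X - C (s : ℤ))).coeff i

lemma comtet_key (Cset : Finset ℕ) (h0 : 0 ∈ Cset) (N : ℕ) (hN : N = Cset.card)
    (x : ℕ) (hx : x ∈ Cset) :
    ((x : ℤ)) ^ N = -∑ i ∈ Finset.Icc 1 (N - 1), comtet Cset i * (x : ℤ) ^ i := by
  classical
  set P := ∏ s ∈ Cset, (Polynomial.X - Polynomial.C (s : ℤ)) with hP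
  have hmonic : P.Monic :=
    Polynomial.monic_prod_of_monic _ _ fun _ _ => Polynomial.monic_X_sub_C _
  have hdeg : P.natDegree = N := by
    rw [hP, Polynomial.natDegree_prod_of_monic _ _ fun _ _ => Polynomial.monic_X_sub_C _]
    simp only [Polynomial.natDegree_X_sub_C]
    simp [hN]
  have heval : P.eval (x : ℤ) = 0 := by
    rw [hP, Polynomial.eval_prod]
    exact Finset.prod_eq_zero hx (by simp)
  have hc0 : P.coeff 0 = 0 := by
    rw [Polynomial.coeff_zero_eq_eval_zero, hP, Polynomial.eval_prod]
    exact Finset.prod_eq_zero h0 (by simp)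
  have hcc : ∀ i, comtet Cset i = P.coeff i := fun i => rfl
  have hN1 : 1 ≤ N := by rw [hN]; exact Finset.card_pos.2 ⟨0, h0⟩
  have hsum := Polynomial.eval_eq_sum_range (p := P) (x := (x : ℤ))
  rw [heval, hdeg, Finset.sum_range_succ] at hsum
  have hcoeffN : P.coeff N = 1 := by rw [← hdeg]; exact hmonic.coeff_natDegree
  rw [hcoeffN, one_mul] at hsum
  have hrange : ∑ i ∈ Finset.range N, P.coeff i * (x : ℤ) ^ i
      = ∑ i ∈ Finset.Icc 1 (N - 1), P.coeff i * (x : ℤ) ^ i := by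
    have hIco : Finset.Ico 1 N = Finset.Icc 1 (N - 1) := by
      rw [← Finset.Ico_add_one_right_eq_Icc]
      congr 1
      omega
    rw [Finset.range_eq_Ico, Finset.sum_eq_sum_Ico_succ_bot hN1, hc0, zero_mul, zero_add, hIco]
  rw [hrange] at hsum
  simp only [hcc]
  linarith [hsum]

theorem zagreb2_recurrence (G : SimpleGraph V) [DecidableRel G.Adj]
    (n : ℕ) (hn : n = Fintype.card V)
    (Cset : Finset ℕ) (hC : Cset = (Finset.range n ×ˢ Finset.range n).image fun p => p.1 * p.2)
    (N : ℕ) (hN : N = Cset.card) :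
    (zagreb2 G N : ℤ) = -∑ i ∈ Finset.Icc 1 (N - 1), comtet Cset i * zagreb2 G i := by
  classical
  rcases Nat.eq_zero_or_pos n with hn0 | hnpos
  · -- no vertices, hence no edges; everything is zero
    have hempty : IsEmpty V := by
      rw [← Fintype.card_eq_zero_iff, ← hn, hn0]
    have hE : G.edgeFinset = ∅ := by
      apply Finset.eq_empty_of_forall_notMem
      intro e he
      induction e with
      | h u v => exact hempty.elim u
    simp [zagreb2, edgeSum, hE]
  · have h0 : 0 ∈ Cset := by
      rw [hC]
      exact Finset.mem_image.2 ⟨(0, 0), by simp [Finset.mem_product, hnpos], by simp⟩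
    have hpt : ∀ e : Sym2 V, ∀ p : ℕ,
        ((Sym2.lift ⟨fun u v => (G.degree u * G.degree v) ^ p,
          fun x y => by ring_nf⟩ e : ℕ) : ℤ)
          = ((Sym2.lift ⟨fun u v => (G.degree u * G.degree v),
            fun x y => by ring_nf⟩ e : ℕ) : ℤ) ^ p := by
      intro e p
      induction e with
      | h u v => simp only [Sym2.lift_mk]; push_cast; ring
    have hmem : ∀ e : Sym2 V,
        (Sym2.lift ⟨fun u v => (G.degree u * G.degree v),
          fun x y => by ring_nf⟩ e : ℕ) ∈ Cset := by
      intro e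
      induction e with
      | h u v =>
        rw [hC]
        refine Finset.mem_image.2 ⟨(G.degree u, G.degree v), ?_, by simp⟩
        simp only [Finset.mem_product, Finset.mem_range]
        exact ⟨hn ▸ G.degree_lt_card_verts u, hn ▸ G.degree_lt_card_verts v⟩
    have hz : ∀ p : ℕ, (zagreb2 G p : ℤ) =
        ∑ e ∈ G.edgeFinset,
          ((Sym2.lift ⟨fun u v => (G.degree u * G.degree v),
            fun x y => by ring_nf⟩ e : ℕ) : ℤ) ^ p := by
      intro p
      rw [zagreb2, edgeSum, Nat.cast_sum]
      exact Finset.sum_congr rfl fun e _ => hpt e p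
    rw [hz]
    have : ∀ e ∈ G.edgeFinset,
        ((Sym2.lift ⟨fun u v => (G.degree u * G.degree v),
          fun x y => by ring_nf⟩ e : ℕ) : ℤ) ^ N
        = -∑ i ∈ Finset.Icc 1 (N - 1), comtet Cset i *
            ((Sym2.lift ⟨fun u v => (G.degree u * G.degree v),
              fun x y => by ring_nf⟩ e : ℕ) : ℤ) ^ i := by
      intro e _
      exact comtet_key Cset h0 N hN _ (hmem e)
    rw [Finset.sum_congr rfl this, Finset.sum_neg_distrib, neg_inj]
    rw [Finset.sum_comm]
    refine Finset.sum_congr rfl fun i _ => ?_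
    rw [hz i, Finset.mul_sum]
end
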